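/- Let n, t be positive integers with t ≤ n, and let f : 𝔽₂ⁿ → 𝔽₂ be a Boolean function. Then f is a t-th order correlation-immune function if and only if ℱ_{π·f}(2^{n−t}) = ∑_{k=0}^{2ⁿ−1} (−1)^{(π·f)(k)} ξ^{−k·2^{n−t}} = 0 for every permutation π of {1,…,n}, where (π·f)(x₁,…,x_n) = f(x_{π(1)},…,x_{π(n)}) and ξ = exp(2π√−1/2ⁿ). -/

import Mathlib

noncomputable section

open Finset

/-- Inner product modulo 2 on `𝔽₂ⁿ`. -/
def dotp {n : ℕ} (c x : Fin n → ZMod 2) : ZMod 2 := ∑ j, c j * x j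

/-- Hamming weight of a vector in `𝔽₂ⁿ`. -/
def wt {n : ℕ} (c : Fin n → ZMod 2) : ℕ := (Finset.univ.filter fun j => c j ≠ 0).card

/-- `f` is `t`-th order correlation-immune: fixing any `t` coordinates does not
change the output distribution (counting form). -/
def CI {n : ℕ} {A : Type*} (t : ℕ) (f : (Fin n → ZMod 2) → A) : Prop :=
  ∀ S : Finset (Fin n), S.card = t → ∀ a : Fin n → ZMod 2, ∀ α : A,
    2 ^ t * Nat.card {x : Fin n → ZMod 2 // f x = α ∧ ∀ j ∈ S, x j = a j}
      = Nat.card {x : Fin n → ZMod 2 // f x = α}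

/-- Binary expansion of `k` as a vector in `𝔽₂ⁿ`, `k = ∑ x_j 2^j`. -/
def bin (n k : ℕ) : Fin n → ZMod 2 := fun j => ((k / 2 ^ (j : ℕ)) % 2 : ℕ)

/-- `ω i = exp(2π√-1 / 2^i)`, a primitive `2^i`-th root of unity in `ℂ`. -/
def ω (i : ℕ) : ℂ := Complex.exp (2 * Real.pi * Complex.I / 2 ^ i)

/-! ### Auxiliary definitions -/

abbrev V (n : ℕ) := Fin n → ZMod 2

/-- The value of a vector in `𝔽₂ⁿ` as a natural number. -/
def vOf {n : ℕ} (x : V n) : ℕ := ∑ j : Fin n, (x j).val * 2 ^ (j : ℕ)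

/-- `η t = exp(-2π√-1/2^t)`, the inverse of `ω t`. -/
def eta (t : ℕ) : ℂ := (ω t)⁻¹

/-- Subcube of vectors agreeing with `b` on `S`. -/
def cube {n : ℕ} (S : Finset (Fin n)) (b : V n) : Finset (V n) :=
  univ.filter (fun y => ∀ j ∈ S, y j = b j)

/-- Signed count of `f` over the subcube determined by `S` and `b`. -/
def DSsum {n : ℕ} (f : V n → ZMod 2) (S : Finset (Fin n)) (b : V n) : ℤ :=
  ∑ y ∈ cube S b, (-1) ^ (f y).val

/-- Count of points of the subcube where `f` takes the value `α`. -/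
def NSnum {n : ℕ} (f : V n → ZMod 2) (S : Finset (Fin n)) (b : V n) (α : ZMod 2) : ℕ :=
  (univ.filter (fun y => f y = α ∧ ∀ j ∈ S, y j = b j)).card

/-- Vectors supported on `S`. -/
def CS {n : ℕ} (S : Finset (Fin n)) : Finset (V n) :=
  univ.filter (fun c => ∀ j, j ∉ S → c j = 0)

/-- The partial signed sum appearing in the Fourier coefficient. -/
def DK (n t : ℕ) (f : V n → ZMod 2) (π : Equiv.Perm (Fin n)) (m : ℕ) : ℤ :=
  ∑ k ∈ (Finset.range (2 ^ n)).filter (fun k => k % 2 ^ t = m),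
    (-1) ^ (f (fun j => bin n k (π j))).val

/-! ### ZMod 2 helpers -/

lemma zmod2_cases (v : ZMod 2) : v = 0 ∨ v = 1 := by revert v; decide

lemma zmod2_add_self (v : ZMod 2) : v + v = 0 := by revert v; decide

lemma zmod2_ne (u v : ZMod 2) (h : u ≠ v) : v = u + 1 := by revert h; revert u v; decide

/-! ### Binary expansion lemmas -/

lemma bin_succ (n k : ℕ) (j : Fin n) : bin (n+1) k j.succ = bin n (k/2) j := by
  simp only [bin, Fin.val_succ]
  congr 1
  rw [Nat.div_div_eq_div_mul]
  congr 1
  ring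

lemma vOf_succ {n : ℕ} (x : Fin (n+1) → ZMod 2) :
    vOf x = (x 0).val + 2 * vOf (fun j => x j.succ) := by
  simp only [vOf, Fin.sum_univ_succ, Fin.val_zero, pow_zero, mul_one, Fin.val_succ, pow_succ,
    Finset.mul_sum]
  congr 1
  exact Finset.sum_congr rfl fun j _ => by ring

lemma vOf_lt {n : ℕ} (x : Fin n → ZMod 2) : vOf x < 2 ^ n := by
  induction n with
  | zero => simp [vOf]
  | succ n ih =>
    have h1 := ih (fun j => x j.succ)
    have h2 : (x 0).val < 2 := ZMod.val_lt (x 0)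
    rw [vOf_succ, pow_succ]
    omega

lemma bin_vOf {n : ℕ} (x : Fin n → ZMod 2) : bin n (vOf x) = x := by
  induction n with
  | zero => funext j; exact absurd j.2 (by omega)
  | succ n ih =>
    have h2 : (x 0).val < 2 := ZMod.val_lt (x 0)
    funext j
    refine Fin.cases ?_ (fun j' => ?_) j
    · have : vOf x % 2 = (x 0).val := by rw [vOf_succ]; omega
      simp [bin, this, ZMod.natCast_val, ZMod.cast_id]
    · rw [bin_succ]
      have : vOf x / 2 = vOf (fun j => x j.succ) := by rw [vOf_succ]; omega
      rw [this, ih (fun j => x j.succ)]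

lemma vOf_bin (n k : ℕ) (hk : k < 2 ^ n) : vOf (bin n k) = k := by
  induction n generalizing k with
  | zero => simp at hk; simp [hk, vOf]
  | succ n ih =>
    have htail : (fun j => bin (n+1) k j.succ) = bin n (k/2) := by
      funext j; exact bin_succ n k j
    rw [vOf_succ, htail, ih _ (by rw [pow_succ] at hk; omega)]
    have : (bin (n+1) k 0) = ((k % 2 : ℕ) : ZMod 2) := by simp [bin]
    rw [this, ZMod.val_natCast_of_lt (by omega)]
    omega

/-! ### Bit arithmetic -/

lemma div_mod_two_cases (k j : ℕ) : k / 2 ^ j % 2 = 0 ∨ k / 2 ^ j % 2 = 1 := by omega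

lemma testBit_div_mod (k j : ℕ) : k.testBit j = decide (k / 2 ^ j % 2 = 1) :=
  Nat.testBit_eq_decide_div_mod_eq

lemma bit_of_mod_pow (t k j : ℕ) (hj : j < t) : k % 2 ^ t / 2 ^ j % 2 = k / 2 ^ j % 2 := by
  have h1 : (k % 2 ^ t).testBit j = k.testBit j := by
    simp [Nat.testBit_mod_two_pow, hj]
  rw [testBit_div_mod, testBit_div_mod] at h1
  have := div_mod_two_cases (k % 2 ^ t) j
  have := div_mod_two_cases k j
  simp only [decide_eq_decide] at h1
  omega

lemma mod_pow_eq_of_bits (t k m : ℕ) (hm : m < 2 ^ t)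
    (h : ∀ j < t, k / 2 ^ j % 2 = m / 2 ^ j % 2) : k % 2 ^ t = m := by
  have : k % 2 ^ t = m % 2 ^ t := by
    apply Nat.eq_of_testBit_eq
    intro i
    by_cases hi : i < t
    · rw [Nat.testBit_mod_two_pow]
      simp only [hi, decide_true, Bool.true_and]
      rw [testBit_div_mod, testBit_div_mod, h i hi, bit_of_mod_pow t m i hi]
    · simp [Nat.testBit_mod_two_pow, hi]
  rw [this, Nat.mod_eq_of_lt hm]

/-! ### Sums of powers -/

lemma geom_two (s : ℕ) : (∑ i ∈ Finset.range s, 2 ^ i) + 1 = 2 ^ s := by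
  induction s with
  | zero => simp
  | succ s ih => rw [Finset.sum_range_succ, pow_succ]; omega

lemma vOf_split {t : ℕ} (x : Fin t → ZMod 2) (j₀ : Fin t) :
    vOf x = (∑ j ∈ univ.erase j₀, (x j).val * 2 ^ (j : ℕ)) + (x j₀).val * 2 ^ (j₀ : ℕ) :=
  (Finset.sum_erase_add univ _ (mem_univ j₀)).symm

lemma sum_pow_erase {t : ℕ} (j₀ : Fin t) :
    (∑ j ∈ univ.erase j₀, 2 ^ (j : ℕ)) + 2 ^ (j₀ : ℕ) + 1 = 2 ^ t := by
  have h1 : (∑ j ∈ univ.erase j₀, 2 ^ (j : ℕ)) + 2 ^ (j₀ : ℕ) = ∑ j : Fin t, 2 ^ (j : ℕ) :=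
    Finset.sum_erase_add univ _ (mem_univ j₀)
  rw [h1, Fin.sum_univ_eq_sum_range, geom_two]

lemma vOf_erase_le {t : ℕ} (x : Fin t → ZMod 2) (j₀ : Fin t) :
    (∑ j ∈ univ.erase j₀, (x j).val * 2 ^ (j : ℕ)) + 2 ^ (j₀ : ℕ) + 1 ≤ 2 ^ t := by
  rw [← sum_pow_erase j₀]
  have : ∑ j ∈ univ.erase j₀, (x j).val * 2 ^ (j : ℕ) ≤ ∑ j ∈ univ.erase j₀, 2 ^ (j : ℕ) := by
    refine Finset.sum_le_sum fun j _ => ?_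
    have : (x j).val < 2 := ZMod.val_lt (x j)
    calc (x j).val * 2 ^ (j : ℕ) ≤ 1 * 2 ^ (j : ℕ) := Nat.mul_le_mul_right _ (by omega)
      _ = 2 ^ (j : ℕ) := one_mul _
  omega

lemma vOf_top_lt {t : ℕ} (ht : 0 < t) (x : Fin t → ZMod 2)
    (hx : x ⟨t - 1, by omega⟩ = 0) : vOf x < 2 ^ (t - 1) := by
  set L : Fin t := ⟨t - 1, by omega⟩ with hL
  have h0 := vOf_split x L
  rw [hx] at h0
  simp only [ZMod.val_zero, zero_mul, add_zero] at h0
  have h2 := vOf_erase_le x L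
  have h3 : (L : ℕ) = t - 1 := rfl
  rw [h3] at h2
  have h4 : 2 ^ t = 2 * 2 ^ (t - 1) := by
    rw [← pow_succ']; congr 1; omega
  omega

lemma vOf_update {t : ℕ} (x : Fin t → ZMod 2) (j₀ : Fin t) (h : x j₀ = 0) :
    vOf (Function.update x j₀ 1) = vOf x + 2 ^ (j₀ : ℕ) := by
  rw [vOf_split (Function.update x j₀ 1) j₀, vOf_split x j₀, h]
  simp only [Function.update_self, ZMod.val_zero, zero_mul, add_zero]
  have h1 : ∑ j ∈ univ.erase j₀, ((Function.update x j₀ 1) j).val * 2 ^ (j : ℕ)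
      = ∑ j ∈ univ.erase j₀, (x j).val * 2 ^ (j : ℕ) := by
    refine Finset.sum_congr rfl fun j hj => ?_
    rw [Function.update_of_ne (Finset.ne_of_mem_erase hj)]
  rw [h1]
  have : ((1 : ZMod 2)).val = 1 := rfl
  rw [this, one_mul]

/-! ### Roots of unity -/

lemma omega_prim (i : ℕ) : IsPrimitiveRoot (ω i) (2 ^ i) := by
  have h := Complex.isPrimitiveRoot_exp (2 ^ i) (by positivity)
  have : ((2 ^ i : ℕ) : ℂ) = (2 : ℂ) ^ i := by push_cast; ring
  rwa [this] at h

lemma eta_prim (t : ℕ) : IsPrimitiveRoot (eta t) (2 ^ t) := (omega_prim t).inv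

lemma eta_pow_t (t : ℕ) : eta t ^ 2 ^ t = 1 := (eta_prim t).pow_eq_one

lemma omega_pow_half (t : ℕ) (ht : 0 < t) : ω t ^ 2 ^ (t - 1) = -1 := by
  rw [ω, ← Complex.exp_nat_mul]
  have h : (2 ^ (t - 1) : ℕ) * (2 * Real.pi * Complex.I / 2 ^ t) = Real.pi * Complex.I := by
    have h2 : (2 : ℂ) ^ t = 2 * 2 ^ (t - 1) := by
      rw [← pow_succ']; congr 1; omega
    field_simp [h2]
    rw [h2]; push_cast; ring
  rw [h, Complex.exp_pi_mul_I]

lemma eta_pow_half (t : ℕ) (ht : 0 < t) : eta t ^ 2 ^ (t - 1) = -1 := by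
  rw [eta, inv_pow, omega_pow_half t ht]
  norm_num

lemma omega_zpow (n t k : ℕ) (htn : t ≤ n) :
    ω n ^ (-(k * 2 ^ (n - t) : ℤ)) = eta t ^ k := by
  have h1 : ω n ^ ((2 : ℕ) ^ (n - t)) = ω t := by
    rw [ω, ← Complex.exp_nat_mul, ω]
    congr 1
    have h2 : (2 : ℂ) ^ (n - t) * 2 ^ t = 2 ^ n := by
      rw [← pow_add]; congr 1; omega
    field_simp
    rw [← h2]
    push_cast; ring
  rw [zpow_neg, show ((k : ℤ) * 2 ^ (n - t)) = ((k * 2 ^ (n - t) : ℕ) : ℤ) by push_cast; ring,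
    zpow_natCast, pow_mul', h1, eta, inv_pow]

/-! ### Linear independence of powers of a primitive root -/

lemma lin_indep (t : ℕ) (ht : 0 < t) (c : ℕ → ℤ)
    (h : ∑ m ∈ range (2 ^ (t - 1)), (c m : ℂ) * eta t ^ m = 0) :
    ∀ m ∈ range (2 ^ (t - 1)), c m = 0 := by
  by_contra hc
  push_neg at hc
  obtain ⟨m₀, hm₀, hne⟩ := hc
  set M := 2 ^ (t - 1) with hM
  set p : Polynomial ℤ := ∑ m ∈ range M, Polynomial.C (c m) * Polynomial.X ^ m with hp
  have hcoeff : p.coeff m₀ = c m₀ := by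
    rw [hp, Polynomial.finset_sum_coeff]
    simp only [Polynomial.coeff_C_mul, Polynomial.coeff_X_pow]
    rw [Finset.sum_congr rfl (fun m _ => by rw [mul_ite, mul_one, mul_zero])]
    rw [Finset.sum_ite_eq (range M) m₀ c]
    simp [Finset.mem_range.1 hm₀]
  have hp0 : p ≠ 0 := fun h0 => hne (by rw [← hcoeff, h0, Polynomial.coeff_zero])
  have hint : IsIntegral ℤ (eta t) := (eta_prim t).isIntegral (by positivity)
  have heval : Polynomial.aeval (eta t) p = 0 := by
    rw [hp, map_sum]
    simp only [map_mul, Polynomial.aeval_C, map_pow, Polynomial.aeval_X]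
    rw [← h]
    refine Finset.sum_congr rfl fun m _ => ?_
    norm_num
  have hdvd : minpoly ℤ (eta t) ∣ p := minpoly.isIntegrallyClosed_dvd hint heval
  have hdeg1 : (minpoly ℤ (eta t)).natDegree ≤ p.natDegree :=
    Polynomial.natDegree_le_of_dvd hdvd hp0
  have hdeg2 : p.natDegree < M := by
    have hub : p.natDegree ≤ M - 1 := by
      refine Polynomial.natDegree_sum_le_of_forall_le _ _ fun m hm => ?_
      refine le_trans (Polynomial.natDegree_C_mul_le _ _) ?_
      rw [Polynomial.natDegree_X_pow]
      have := Finset.mem_range.1 hm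
      omega
    have : 0 < M := by positivity
    omega
  have htot := (eta_prim t).totient_le_degree_minpoly
  have htval : (2 ^ t).totient = 2 ^ (t - 1) := by
    rw [Nat.totient_prime_pow Nat.prime_two ht]
    omega
  rw [htval] at htot
  omega

/-! ### Subcube counting lemmas -/

lemma cube_congr {n : ℕ} (S : Finset (Fin n)) {b b' : V n} (h : ∀ j ∈ S, b j = b' j) :
    cube S b = cube S b' := by
  unfold cube
  refine Finset.filter_congr fun y _ => ?_
  constructor
  · intro hy j hj; rw [← h j hj]; exact hy j hj
  · intro hy j hj; rw [h j hj]; exact hy j hj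

lemma DS_congr {n : ℕ} (f : V n → ZMod 2) (S : Finset (Fin n)) {b b' : V n}
    (h : ∀ j ∈ S, b j = b' j) : DSsum f S b = DSsum f S b' := by
  unfold DSsum; rw [cube_congr S h]

lemma cube_card_eq {n : ℕ} (S : Finset (Fin n)) (b b' : V n) :
    (cube S b).card = (cube S b').card := by
  classical
  set δ : V n := fun j => if j ∈ S then b j + b' j else 0 with hδ
  have hinv : ∀ y : V n, (fun j => y j + δ j) + δ = y := by
    intro y; funext j
    show y j + δ j + δ j = y j
    have h1 : δ j + δ j = 0 := zmod2_add_self _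
    rw [add_assoc, h1, add_zero]
  refine Finset.card_nbij' (fun y => y + δ) (fun y => y + δ) ?_ ?_ ?_ ?_
  · intro y hy
    simp only [cube, Finset.mem_coe, mem_filter, mem_univ, true_and] at hy ⊢
    intro j hj
    show y j + δ j = b' j
    rw [hy j hj, hδ]
    simp only [hj, if_pos]
    rw [← add_assoc, zmod2_add_self, zero_add]
  · intro y hy
    simp only [cube, Finset.mem_coe, mem_filter, mem_univ, true_and] at hy ⊢
    intro j hj
    show y j + δ j = b j
    rw [hy j hj, hδ]
    simp only [hj, if_pos]
    rw [add_comm (b j) (b' j), ← add_assoc, zmod2_add_self, zero_add]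
  · intro y _; exact hinv y
  · intro y _; exact hinv y

lemma NS_filter {n : ℕ} (f : V n → ZMod 2) (S : Finset (Fin n)) (b : V n) (α : ZMod 2) :
    (cube S b).filter (fun y => f y = α) =
      univ.filter (fun y => f y = α ∧ ∀ j ∈ S, y j = b j) := by
  unfold cube
  rw [Finset.filter_filter]
  refine Finset.filter_congr fun y _ => ?_
  tauto

lemma NS_add {n : ℕ} (f : V n → ZMod 2) (S : Finset (Fin n)) (b : V n) :
    NSnum f S b 0 + NSnum f S b 1 = (cube S b).card := by
  unfold NSnum
  rw [← NS_filter, ← NS_filter]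
  have hkey : ((cube S b).filter (fun y => f y = 0)).card
      + ((cube S b).filter (fun y => ¬ f y = 0)).card = (cube S b).card :=
    Finset.card_filter_add_card_filter_not (fun y => f y = 0)
  have hre : (cube S b).filter (fun y => f y = 1) = (cube S b).filter (fun y => ¬ f y = 0) :=
    Finset.filter_congr fun y _ => by rcases zmod2_cases (f y) with h | h <;> simp [h]
  rw [hre]
  exact hkey

lemma DS_eq {n : ℕ} (f : V n → ZMod 2) (S : Finset (Fin n)) (b : V n) :
    DSsum f S b = (NSnum f S b 0 : ℤ) - NSnum f S b 1 := by
  unfold DSsum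
  rw [← Finset.sum_filter_add_sum_filter_not (cube S b) (fun y => f y = 0)]
  have h0 : ∀ y ∈ (cube S b).filter (fun y => f y = 0), ((-1 : ℤ)) ^ (f y).val = 1 := by
    intro y hy
    rw [(Finset.mem_filter.1 hy).2]
    simp
  have h1 : ∀ y ∈ (cube S b).filter (fun y => ¬ f y = 0), ((-1 : ℤ)) ^ (f y).val = -1 := by
    intro y hy
    have := (Finset.mem_filter.1 hy).2
    rcases zmod2_cases (f y) with h | h
    · exact absurd h this
    · rw [h]; norm_num [ZMod.val_one]
  rw [Finset.sum_congr rfl h0, Finset.sum_congr rfl h1, Finset.sum_const, Finset.sum_const]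
  have hre : (cube S b).filter (fun y => ¬ f y = 0) = (cube S b).filter (fun y => f y = 1) := by
    refine Finset.filter_congr fun y _ => ?_
    rcases zmod2_cases (f y) with h | h <;> simp [h]
  rw [hre, NS_filter, NS_filter]
  unfold NSnum
  simp only [nsmul_eq_mul, mul_one, mul_neg]
  ring

lemma NS_eq_of_DS {n : ℕ} (f : V n → ZMod 2) (S : Finset (Fin n)) (b b' : V n)
    (h : DSsum f S b = DSsum f S b') (α : ZMod 2) : NSnum f S b α = NSnum f S b' α := by
  have h1 := NS_add f S b
  have h2 := NS_add f S b'
  have h3 := cube_card_eq S b b'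
  rw [DS_eq, DS_eq] at h
  rcases zmod2_cases α with hα | hα <;> subst hα <;> omega

lemma CS_card {n t : ℕ} (S : Finset (Fin n)) (hS : S.card = t) : (CS S).card = 2 ^ t := by
  classical
  have hcard : (CS S).card = (univ : Finset ({ x // x ∈ S } → ZMod 2)).card := by
    refine Finset.card_bij' (fun c _ => fun j => c j.1)
      (fun d _ => fun i => if h : i ∈ S then d ⟨i, h⟩ else 0) ?_ ?_ ?_ ?_
    · intro c hc; exact mem_univ _
    · intro d hd
      simp only [CS, mem_filter, mem_univ, true_and]
      intro j hj
      simp [hj]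
    · intro c hc
      simp only [CS, mem_filter, mem_univ, true_and] at hc
      funext i
      by_cases h : i ∈ S
      · simp [h]
      · simp [h, hc i h]
    · intro d hd
      funext j
      simp [j.2]
  rw [hcard, Finset.card_univ, Fintype.card_fun, Fintype.card_coe, hS]
  norm_num

lemma partition_lemma {n t : ℕ} (f : V n → ZMod 2) (S : Finset (Fin n)) (hS : S.card = t)
    (b : V n) (α : ZMod 2) (hconst : ∀ b', NSnum f S b' α = NSnum f S b α) :
    2 ^ t * NSnum f S b α = (univ.filter (fun y => f y = α)).card := by
  classical
  set mask : V n → V n := fun y => fun j => if j ∈ S then y j else 0 with hmask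
  have hmaps : ∀ y ∈ univ.filter (fun y : V n => f y = α), mask y ∈ CS S := by
    intro y _
    simp only [CS, mem_filter, mem_univ, true_and, hmask]
    intro j hj
    simp [hj]
  rw [Finset.card_eq_sum_card_fiberwise hmaps]
  have hfiber : ∀ c ∈ CS S,
      ((univ.filter (fun y : V n => f y = α)).filter (fun y => mask y = c)).card
        = NSnum f S c α := by
    intro c hc
    simp only [CS, mem_filter, mem_univ, true_and] at hc
    unfold NSnum
    rw [Finset.filter_filter]
    congr 1
    refine Finset.filter_congr fun y _ => ?_
    constructor
    · rintro ⟨h1, h2⟩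
      refine ⟨h1, fun j hj => ?_⟩
      rw [← h2]
      simp [hmask, hj]
    · rintro ⟨h1, h2⟩
      refine ⟨h1, ?_⟩
      funext j
      by_cases hj : j ∈ S
      · simp [hmask, hj, h2 j hj]
      · simp [hmask, hj, hc j hj]
  rw [Finset.sum_congr rfl hfiber]
  rw [Finset.sum_congr rfl (fun c _ => hconst c)]
  rw [Finset.sum_const, CS_card S hS]
  simp [mul_comm]

/-! ### The bridge between `DK` and subcube sums -/

section Bridge

variable {n t : ℕ} (htn : t ≤ n)

/-- The embedding of `Fin t` into `Fin n`. -/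
def embF (htn : t ≤ n) : Fin t → Fin n := fun j => ⟨j.1, lt_of_lt_of_le j.2 htn⟩

lemma embF_inj : Function.Injective (embF htn) := by
  intro a b h
  simpa [embF, Fin.ext_iff] using h

lemma bridge (f : V n → ZMod 2) (π : Equiv.Perm (Fin n)) (m : ℕ) (hm : m < 2 ^ t) :
    DK n t f π m = DSsum f (image (fun j => π⁻¹ (embF htn j)) univ)
      (Function.extend (fun j => π⁻¹ (embF htn j)) (bin t m) 0) := by
  classical
  set g : Fin t → Fin n := fun j => π⁻¹ (embF htn j) with hg
  have hginj : Function.Injective g := fun a b h => embF_inj htn (π⁻¹.injective h)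
  unfold DK DSsum cube
  refine Finset.sum_nbij' (fun k => fun j => bin n k (π j))
    (fun y => vOf (fun i => y (π⁻¹ i))) ?_ ?_ ?_ ?_ ?_
  · intro k hk
    obtain ⟨hk1, hk2⟩ := Finset.mem_filter.1 hk
    simp only [mem_filter, mem_univ, true_and]
    intro j' hj'
    obtain ⟨j₀, _, rfl⟩ := Finset.mem_image.1 hj'
    rw [Function.Injective.extend_apply hginj]
    show bin n k (π (π⁻¹ (embF htn j₀))) = bin t m j₀
    rw [show π (π⁻¹ (embF htn j₀)) = embF htn j₀ from π.apply_symm_apply _]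
    show ((k / 2 ^ ((j₀ : ℕ)) % 2 : ℕ) : ZMod 2) = ((m / 2 ^ ((j₀ : ℕ)) % 2 : ℕ) : ZMod 2)
    congr 1
    have := bit_of_mod_pow t k (j₀ : ℕ) j₀.2
    rw [hk2] at this
    omega
  · intro y hy
    simp only [mem_filter, mem_univ, true_and] at hy
    rw [Finset.mem_filter, Finset.mem_range]
    refine ⟨vOf_lt _, ?_⟩
    apply mod_pow_eq_of_bits t _ m hm
    intro j₀ hj₀
    set jF : Fin t := ⟨j₀, hj₀⟩
    have hx : bin n (vOf (fun i => y (π⁻¹ i))) = fun i => y (π⁻¹ i) := bin_vOf _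
    have hxe : ((vOf (fun i => y (π⁻¹ i)) / 2 ^ j₀ % 2 : ℕ) : ZMod 2)
        = y (π⁻¹ (embF htn jF)) := congrFun hx (embF htn jF)
    have hyb : y (π⁻¹ (embF htn jF)) = bin t m jF := by
      rw [show π⁻¹ (embF htn jF) = g jF from rfl]
      rw [hy (g jF) (Finset.mem_image_of_mem g (mem_univ jF))]
      rw [Function.Injective.extend_apply hginj]
    rw [hyb] at hxe
    have h2 : ((vOf (fun i => y (π⁻¹ i)) / 2 ^ j₀ % 2 : ℕ) : ZMod 2)
        = ((m / 2 ^ j₀ % 2 : ℕ) : ZMod 2) := hxe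
    have e1 := ZMod.val_natCast_of_lt (show vOf (fun i => y (π⁻¹ i)) / 2 ^ j₀ % 2 < 2 by omega)
    have e2 := ZMod.val_natCast_of_lt (show m / 2 ^ j₀ % 2 < 2 by omega)
    rw [← e1, ← e2, h2]
  · intro k hk
    obtain ⟨hk1, _⟩ := Finset.mem_filter.1 hk
    show vOf (fun i => bin n k (π (π⁻¹ i))) = k
    have heq : (fun i => bin n k (π (π⁻¹ i))) = bin n k := by
      funext i; rw [show π (π⁻¹ i) = i from π.apply_symm_apply i]
    rw [heq, vOf_bin n k (Finset.mem_range.1 hk1)]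
  · intro y hy
    funext j
    show bin n (vOf (fun i => y (π⁻¹ i))) (π j) = y j
    rw [bin_vOf (fun i => y (π⁻¹ i))]
    show y (π⁻¹ (π j)) = y j
    rw [show π⁻¹ (π j) = j from π.symm_apply_apply j]
  · intro k hk
    rfl

end Bridge

/-! ### Main theorem -/

theorem stmt7 (n t : ℕ) (hn : 0 < n) (ht : 0 < t) (htn : t ≤ n)
    (f : (Fin n → ZMod 2) → ZMod 2) :
    CI t f ↔ ∀ π : Equiv.Perm (Fin n),
      ∑ k ∈ Finset.range (2 ^ n),
        (-1 : ℂ) ^ (f (fun j => bin n k (π j))).val * ω n ^ (-(k * 2 ^ (n - t) : ℤ)) = 0 := by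
  classical
  have h2t : 2 ^ t = 2 ^ (t - 1) + 2 ^ (t - 1) := by
    obtain ⟨s, rfl⟩ : ∃ s, t = s + 1 := ⟨t - 1, by omega⟩
    simp only [Nat.add_sub_cancel, pow_succ]
    omega
  -- Key sum transformation
  have key : ∀ π : Equiv.Perm (Fin n),
      (∑ k ∈ Finset.range (2 ^ n),
        (-1 : ℂ) ^ (f (fun j => bin n k (π j))).val * ω n ^ (-(k * 2 ^ (n - t) : ℤ)))
      = ∑ m ∈ Finset.range (2 ^ (t - 1)),
          ((DK n t f π m - DK n t f π (m + 2 ^ (t - 1)) : ℤ) : ℂ) * eta t ^ m := by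
    intro π
    have step1 : ∀ k ∈ Finset.range (2 ^ n),
        (-1 : ℂ) ^ (f (fun j => bin n k (π j))).val * ω n ^ (-(k * 2 ^ (n - t) : ℤ))
        = (((-1 : ℤ) ^ (f (fun j => bin n k (π j))).val : ℤ) : ℂ) * eta t ^ (k % 2 ^ t) := by
      intro k _
      rw [omega_zpow n t k htn]
      have hsplit : eta t ^ k = eta t ^ (k % 2 ^ t) := by
        conv_lhs => rw [← Nat.div_add_mod k (2 ^ t)]
        rw [pow_add, pow_mul, eta_pow_t, one_pow, one_mul]
      rw [hsplit]
      push_cast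
      ring
    rw [Finset.sum_congr rfl step1]
    have hmaps : ∀ k ∈ Finset.range (2 ^ n), k % 2 ^ t ∈ Finset.range (2 ^ t) := by
      intro k _
      exact Finset.mem_range.2 (Nat.mod_lt _ (by positivity))
    rw [← Finset.sum_fiberwise_of_maps_to hmaps]
    have step2 : ∀ m ∈ Finset.range (2 ^ t),
        (∑ k ∈ (Finset.range (2 ^ n)).filter (fun k => k % 2 ^ t = m),
          (((-1 : ℤ) ^ (f (fun j => bin n k (π j))).val : ℤ) : ℂ) * eta t ^ (k % 2 ^ t))
        = ((DK n t f π m : ℤ) : ℂ) * eta t ^ m := by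
      intro m _
      rw [Finset.sum_congr rfl (fun k hk => by rw [(Finset.mem_filter.1 hk).2])]
      rw [← Finset.sum_mul]
      congr 1
      unfold DK
      push_cast
      rfl
    rw [Finset.sum_congr rfl step2]
    rw [h2t, Finset.sum_range_add]
    have step3 : ∀ m ∈ Finset.range (2 ^ (t - 1)),
        ((DK n t f π (2 ^ (t - 1) + m) : ℤ) : ℂ) * eta t ^ (2 ^ (t - 1) + m)
        = -(((DK n t f π (m + 2 ^ (t - 1)) : ℤ) : ℂ) * eta t ^ m) := by
      intro m _
      rw [pow_add, eta_pow_half t ht, Nat.add_comm (2 ^ (t-1)) m]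
      ring
    rw [Finset.sum_congr rfl step3]
    rw [← Finset.sum_add_distrib]
    refine Finset.sum_congr rfl fun m _ => ?_
    push_cast
    ring
  -- the flip condition
  constructor
  · -- CI → Fourier vanishing
    intro hCI π
    rw [key π]
    refine Finset.sum_eq_zero fun m hm => ?_
    have hflip : DK n t f π m = DK n t f π (m + 2 ^ (t - 1)) := by
      set g : Fin t → Fin n := fun j => π⁻¹ (embF htn j) with hg
      have hginj : Function.Injective g := fun a b h => embF_inj htn (π⁻¹.injective h)
      set S : Finset (Fin n) := image g univ with hSdef
      have hS : S.card = t := by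
        rw [hSdef, Finset.card_image_of_injective _ hginj, Finset.card_univ, Fintype.card_fin]
      have hmlt : m < 2 ^ (t - 1) := Finset.mem_range.1 hm
      have hb1 := bridge htn f π m (by omega)
      have hb2 := bridge htn f π (m + 2 ^ (t - 1)) (by omega)
      rw [hb1, hb2]
      set b1 := Function.extend g (bin t m) 0
      set b2 := Function.extend g (bin t (m + 2 ^ (t - 1))) 0
      have hNS : ∀ α : ZMod 2, NSnum f S b1 α = NSnum f S b2 α := by
        intro α
        have hc1 := hCI S hS b1 α
        have hc2 := hCI S hS b2 α
        have hconv : ∀ b : V n,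
            Nat.card {x : Fin n → ZMod 2 // f x = α ∧ ∀ j ∈ S, x j = b j} = NSnum f S b α := by
          intro b
          rw [Nat.card_eq_fintype_card]
          unfold NSnum
          exact Fintype.card_subtype _
        rw [hconv b1] at hc1
        rw [hconv b2] at hc2
        have := hc1.trans hc2.symm
        have hpos : (0 : ℕ) < 2 ^ t := by positivity
        exact Nat.eq_of_mul_eq_mul_left hpos this
      rw [DS_eq, DS_eq, hNS 0, hNS 1]
    rw [hflip]
    push_cast
    ring
  · -- Fourier vanishing → CI
    intro hF
    have hflip : ∀ (π : Equiv.Perm (Fin n)) m, m < 2 ^ (t - 1) →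
        DK n t f π m = DK n t f π (m + 2 ^ (t - 1)) := by
      intro π m hm
      have h0 := hF π
      rw [key π] at h0
      have h1 := lin_indep t ht (fun m => DK n t f π m - DK n t f π (m + 2 ^ (t - 1))) h0
        m (Finset.mem_range.2 hm)
      have h2 : DK n t f π m - DK n t f π (m + 2 ^ (t - 1)) = 0 := h1
      omega
    -- single-coordinate flip invariance
    have hstep : ∀ S : Finset (Fin n), S.card = t → ∀ i ∈ S, ∀ b : V n, b i = 0 →
        DSsum f S b = DSsum f S (Function.update b i 1) := by
      intro S hS i hi b hb
      have hembinj := embF_inj (n := n) (t := t) htn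
      set A : Finset (Fin n) := image (embF htn) univ with hAdef
      have hA : A.card = t := by
        rw [hAdef, Finset.card_image_of_injective _ hembinj, Finset.card_univ, Fintype.card_fin]
      have hAc : Fintype.card {x // x ∈ A} = t := by rw [Fintype.card_coe]; exact hA
      have hSc : Fintype.card {x // x ∈ S} = t := by rw [Fintype.card_coe]; exact hS
      set qA := Fintype.equivFinOfCardEq hAc with hqA
      set qS := Fintype.equivFinOfCardEq hSc with hqS
      set L : Fin t := ⟨t - 1, by omega⟩ with hLdef
      have hmemA : embF htn L ∈ A := Finset.mem_image_of_mem _ (mem_univ _)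
      set E : {x // x ∈ A} ≃ {x // x ∈ S} :=
        (qA.trans (Equiv.swap (qA ⟨embF htn L, hmemA⟩) (qS ⟨i, hi⟩))).trans qS.symm with hE
      set ρ : Equiv.Perm (Fin n) := E.extendSubtype with hρdef
      have hρ : ∀ j : Fin t, ρ (embF htn j)
          = (E ⟨embF htn j, Finset.mem_image_of_mem _ (mem_univ _)⟩ : Fin n) := by
        intro j
        exact E.extendSubtype_apply_of_mem _ _
      set g : Fin t → Fin n := fun j => ρ (embF htn j) with hgdef
      have hginj : Function.Injective g := fun a b h => hembinj (ρ.injective h)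
      have hgS : ∀ j, g j ∈ S := by
        intro j
        rw [hgdef]
        simp only
        rw [hρ j]
        exact (E ⟨embF htn j, Finset.mem_image_of_mem _ (mem_univ _)⟩).2
      have himg : image g univ = S := by
        refine Finset.eq_of_subset_of_card_le ?_ ?_
        · intro x hx
          obtain ⟨j, _, rfl⟩ := Finset.mem_image.1 hx
          exact hgS j
        · rw [hS, Finset.card_image_of_injective _ hginj, Finset.card_univ, Fintype.card_fin]
      have hgL : g L = i := by
        rw [hgdef]
        simp only
        rw [hρ L]
        have : E ⟨embF htn L, hmemA⟩ = ⟨i, hi⟩ := by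
          rw [hE]
          simp [Equiv.swap_apply_left]
        rw [this]
      set π : Equiv.Perm (Fin n) := ρ⁻¹ with hπdef
      have hπg : (fun j => π⁻¹ (embF htn j)) = g := by
        funext j
        rw [hπdef, inv_inv]
      set x : Fin t → ZMod 2 := fun j => b (g j) with hx
      have hxL : x L = 0 := by rw [hx]; simp only; rw [hgL]; exact hb
      set m := vOf x with hm
      have hm1 : m < 2 ^ (t - 1) := vOf_top_lt ht x hxL
      have hbinm : bin t m = x := bin_vOf x
      have hup : Function.update x L 1 = fun j => (Function.update b i 1) (g j) := by
        funext j
        by_cases hj : j = L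
        · subst hj
          rw [Function.update_self, hgL, Function.update_self]
        · rw [Function.update_of_ne hj]
          have hgne : g j ≠ i := fun hcon => hj (hginj (by rw [hcon, ← hgL]))
          rw [Function.update_of_ne hgne]
      have hm2 : vOf (fun j => (Function.update b i 1) (g j)) = m + 2 ^ (t - 1) := by
        rw [← hup, vOf_update x L hxL]
      have hbinm2 : bin t (m + 2 ^ (t - 1)) = fun j => (Function.update b i 1) (g j) := by
        rw [← hm2]; exact bin_vOf _
      have hb1 := bridge htn f π m (by omega)
      have hb2 := bridge htn f π (m + 2 ^ (t - 1)) (by omega)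
      rw [hπg, himg] at hb1 hb2
      have hfl := hflip π m hm1
      rw [hb1, hb2] at hfl
      have hc1 : DSsum f S (Function.extend g (bin t m) 0) = DSsum f S b := by
        refine DS_congr f S ?_
        intro j hj
        rw [← himg] at hj
        obtain ⟨j₀, _, rfl⟩ := Finset.mem_image.1 hj
        rw [Function.Injective.extend_apply hginj, hbinm]
      have hc2 : DSsum f S (Function.extend g (bin t (m + 2 ^ (t - 1))) 0)
          = DSsum f S (Function.update b i 1) := by
        refine DS_congr f S ?_
        intro j hj
        rw [← himg] at hj
        obtain ⟨j₀, _, rfl⟩ := Finset.mem_image.1 hj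
        rw [Function.Injective.extend_apply hginj, hbinm2]
      rw [hc1, hc2] at hfl
      exact hfl
    -- general flips
    have hflip1 : ∀ S : Finset (Fin n), S.card = t → ∀ i ∈ S, ∀ b : V n,
        DSsum f S b = DSsum f S (Function.update b i (b i + 1)) := by
      intro S hS i hi b
      rcases zmod2_cases (b i) with h | h
      · rw [h, zero_add]
        exact hstep S hS i hi b h
      · have hc : Function.update b i (b i + 1) = Function.update b i 0 := by
          funext j
          by_cases hj : j = i
          · subst hj
            rw [Function.update_self, Function.update_self, h]
            decide
          · rw [Function.update_of_ne hj, Function.update_of_ne hj]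
        rw [hc]
        set c := Function.update b i 0 with hcdef
        have hc0 : c i = 0 := Function.update_self _ _ _
        have hmain := hstep S hS i hi c hc0
        have hcb : Function.update c i 1 = b := by
          funext j
          by_cases hj : j = i
          · subst hj; rw [Function.update_self, h]
          · rw [Function.update_of_ne hj, hcdef, Function.update_of_ne hj]
        rw [hcb] at hmain
        exact hmain.symm
    -- constancy of DSsum
    have hconst : ∀ S : Finset (Fin n), S.card = t → ∀ b b' : V n,
        DSsum f S b = DSsum f S b' := by
      intro S hS
      suffices h : ∀ d (b b' : V n), (S.filter (fun j => b j ≠ b' j)).card = d →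
          DSsum f S b = DSsum f S b' by
        intro b b'
        exact h _ b b' rfl
      intro d
      induction d with
      | zero =>
        intro b b' h
        refine DS_congr f S fun j hj => ?_
        by_contra hne
        have hmem : j ∈ S.filter (fun j => b j ≠ b' j) := Finset.mem_filter.2 ⟨hj, hne⟩
        rw [Finset.card_eq_zero] at h
        rw [h] at hmem
        exact absurd hmem (Finset.notMem_empty j)
      | succ d ih =>
        intro b b' h
        have hne : (S.filter (fun j => b j ≠ b' j)).Nonempty := by
          rw [← Finset.card_pos, h]; omega
        obtain ⟨i, hi⟩ := hne
        have hiS := (Finset.mem_filter.1 hi).1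
        have hbne := (Finset.mem_filter.1 hi).2
        set b'' := Function.update b i (b i + 1) with hb''def
        have hb''i : b'' i = b' i := by
          have := zmod2_ne (b i) (b' i) hbne
          rw [hb''def, Function.update_self, ← this]
        have hfilter : S.filter (fun j => b'' j ≠ b' j)
            = (S.filter (fun j => b j ≠ b' j)).erase i := by
          ext j
          simp only [Finset.mem_erase, Finset.mem_filter]
          constructor
          · rintro ⟨hjS, hjne⟩
            have hji : j ≠ i := by
              intro hcon
              subst hcon
              exact hjne hb''i
            refine ⟨hji, hjS, ?_⟩
            rwa [hb''def, Function.update_of_ne hji] at hjne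
          · rintro ⟨hji, hjS, hjne⟩
            refine ⟨hjS, ?_⟩
            rwa [hb''def, Function.update_of_ne hji]
        have hcard : (S.filter (fun j => b'' j ≠ b' j)).card = d := by
          rw [hfilter, Finset.card_erase_of_mem hi, h]
          omega
        calc DSsum f S b = DSsum f S b'' := hflip1 S hS i hiS b
          _ = DSsum f S b' := ih b'' b' hcard
    -- conclude CI
    intro S hS a α
    have hNconst : ∀ b', NSnum f S b' α = NSnum f S a α := by
      intro b'
      exact NS_eq_of_DS f S b' a (hconst S hS b' a) α
    have hpart := partition_lemma f S hS a α hNconst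
    have hconv1 : Nat.card {x : Fin n → ZMod 2 // f x = α ∧ ∀ j ∈ S, x j = a j}
        = NSnum f S a α := by
      rw [Nat.card_eq_fintype_card]
      unfold NSnum
      exact Fintype.card_subtype _
    have hconv2 : Nat.card {x : Fin n → ZMod 2 // f x = α}
        = (univ.filter (fun y : V n => f y = α)).card := by
      rw [Nat.card_eq_fintype_card]
      exact Fintype.card_subtype _
    rw [hconv1, hconv2]
    exact hpart
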